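/- Let 𝓙 be a generalized complex structure on a finite-dimensional real vector space V, and let W ⊆ V be a split subspace, with N ⊆ V such that V = W ⊕ N and W ⊕ Ann(N) is stable under 𝓙. Then: (i) N ⊕ Ann(W) is also stable under 𝓙; (ii) with ψ : W ⊕ Ann(N) → W ⊕ W* the isomorphism (w,f) ↦ (w, f|_W), the map 𝓙_W := ψ ∘ (𝓙|_{W⊕Ann(N)}) ∘ ψ⁻¹ is a generalized complex structure on W; (iii) W is a generalized complex subspace of V, and the GCS on W determined by the induced maximally isotropic subspace E_W coincides with 𝓙_W. -/

import Mathlib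

open Module LinearMap TensorProduct

/-- The complexification `V_ℂ = ℂ ⊗_ℝ V`. -/
abbrev Cxf (V : Type*) [AddCommGroup V] [Module ℝ V] := ℂ ⊗[ℝ] V

section Conj

variable (V : Type*) [AddCommGroup V] [Module ℝ V]

/-- The complex conjugation on `V_ℂ = ℂ ⊗_ℝ V`. -/
noncomputable def conjC : Cxf V →ₗ[ℝ] Cxf V :=
  TensorProduct.map Complex.conjAe.toLinearMap LinearMap.id

lemma conjC_smul (c : ℂ) (x : Cxf V) :
    conjC V (c • x) = (starRingEnd ℂ c) • conjC V x := by
  induction x using TensorProduct.induction_on with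
  | zero => simp
  | tmul a v =>
      simp [conjC, TensorProduct.smul_tmul', map_mul, Complex.conjAe_coe]
  | add x y hx hy =>
      simp [smul_add, map_add, hx, hy]

/-- The conjugation induced on the complex dual of `V_ℂ`. -/
noncomputable def conjD : Module.Dual ℂ (Cxf V) →ₗ[ℝ] Module.Dual ℂ (Cxf V) where
  toFun f :=
    { toFun := fun x => starRingEnd ℂ (f (conjC V x))
      map_add' := by intro x y; simp [map_add]
      map_smul' := by intro c x; simp [conjC_smul, map_smul] }
  map_add' f g := by ext x; simp
  map_smul' r f := by ext x; simp

/-- The conjugation on `V_ℂ ⊕ V_ℂ*`. -/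
noncomputable def conjP :
    (Cxf V × Module.Dual ℂ (Cxf V)) →ₗ[ℝ] (Cxf V × Module.Dual ℂ (Cxf V)) :=
  LinearMap.prodMap (conjC V) (conjD V)

end Conj

section Pairing

variable (V : Type*) [AddCommGroup V] [Module ℝ V]

/-- The ℂ-bilinear extension of the standard pairing, on `V_ℂ ⊕ V_ℂ*`. -/
noncomputable def gcPairC (x y : Cxf V × Module.Dual ℂ (Cxf V)) : ℂ :=
  -(1/2) * (x.2 y.1 + y.2 x.1)

/-- A GCS on `V`, in terms of a maximally isotropic subspace `E ⊂ V_ℂ ⊕ V_ℂ*`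
with `E ∩ Ē = 0`. -/
noncomputable def IsGCSSub [FiniteDimensional ℝ V]
    (E : Submodule ℂ (Cxf V × Module.Dual ℂ (Cxf V))) : Prop :=
  (∀ x ∈ E, ∀ y ∈ E, gcPairC V x y = 0) ∧
  Module.finrank ℂ ↥E = Module.finrank ℝ V ∧
  (E.restrictScalars ℝ) ⊓ ((E.restrictScalars ℝ).map (conjP V)) = ⊥

end Pairing

section Induced

variable {V : Type*} [AddCommGroup V] [Module ℝ V]

/-- The complexified inclusion `W_ℂ → V_ℂ` of a real subspace `W ⊆ V`. -/
noncomputable def cxIncl (W : Submodule ℝ V) : Cxf ↥W →ₗ[ℂ] Cxf V :=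
  LinearMap.baseChange ℂ W.subtype

/-- The subspace `E_W ⊆ W_ℂ ⊕ W_ℂ*` induced by `E ⊆ V_ℂ ⊕ V_ℂ*`:
`E_W = {(w, f|_{W_ℂ}) : (w, f) ∈ E, w ∈ W_ℂ}`. -/
noncomputable def inducedSub (E : Submodule ℂ (Cxf V × Module.Dual ℂ (Cxf V)))
    (W : Submodule ℝ V) : Submodule ℂ (Cxf ↥W × Module.Dual ℂ (Cxf ↥W)) :=
  (E.comap ((cxIncl W).prodMap (LinearMap.id))).map
    ((LinearMap.id).prodMap ((cxIncl W).dualMap))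

/-- `W` is a generalized complex subspace if `E_W ∩ Ē_W = 0`. -/
noncomputable def IsGCSubspace [FiniteDimensional ℝ V]
    (E : Submodule ℂ (Cxf V × Module.Dual ℂ (Cxf V))) (W : Submodule ℝ V) : Prop :=
  ((inducedSub E W).restrictScalars ℝ) ⊓
    (((inducedSub E W).restrictScalars ℝ).map (conjP ↥W)) = ⊥

end Induced

section Automorphism

noncomputable def gcPair (V : Type*) [AddCommGroup V] [Module ℝ V]
    (x y : V × Module.Dual ℝ V) : ℝ :=
  -(1/2) * (x.2 y.1 + y.2 x.1)

noncomputable def IsGCS (V : Type*) [AddCommGroup V] [Module ℝ V]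
    (J : (V × Module.Dual ℝ V) →ₗ[ℝ] (V × Module.Dual ℝ V)) : Prop :=
  J ∘ₗ J = -LinearMap.id ∧ ∀ x y, gcPair V (J x) (J y) = gcPair V x y

/-- The GCS induced on a split subspace `W` (with splitting `V = W ⊕ N`):
`ψ ∘ (𝓙|_{W ⊕ Ann(N)}) ∘ ψ⁻¹`, where `ψ(w,f) = (w, f|_W)`. -/
noncomputable def inducedSplitJ
    {V : Type*} [AddCommGroup V] [Module ℝ V]
    (J : (V × Module.Dual ℝ V) →ₗ[ℝ] (V × Module.Dual ℝ V))
    (W N : Submodule ℝ V) (hWN : IsCompl W N) :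
    (↥W × Module.Dual ℝ ↥W) →ₗ[ℝ] (↥W × Module.Dual ℝ ↥W) :=
  (LinearMap.prodMap (W.linearProjOfIsCompl N hWN) (W.subtype.dualMap)) ∘ₗ J ∘ₗ
    (LinearMap.prodMap W.subtype ((W.linearProjOfIsCompl N hWN).dualMap))

end Automorphism

section Eigenspace

variable (X : Type*) [AddCommGroup X] [Module ℝ X]

/-- The canonical map `V* → (V_ℂ)*`, extending a real functional ℂ-linearly. -/
noncomputable def dualExt : Module.Dual ℝ X →ₗ[ℝ] Module.Dual ℂ (Cxf X) :=
  ((LinearMap.llcomp ℂ (Cxf X) (ℂ ⊗[ℝ] ℝ) ℂ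
      (Algebra.TensorProduct.rid ℝ ℂ ℂ).toLinearMap).restrictScalars ℝ) ∘ₗ
    (LinearMap.baseChangeHom ℝ ℂ X ℝ)

/-- The canonical real embedding `V ⊕ V* → V_ℂ ⊕ V_ℂ*`. -/
noncomputable def zeta : (X × Module.Dual ℝ X) →ₗ[ℝ] (Cxf X × Module.Dual ℂ (Cxf X)) :=
  LinearMap.prodMap ((TensorProduct.mk ℝ ℂ X) 1) (dualExt X)

/-- Multiplication by `i` on `V_ℂ ⊕ V_ℂ*`, as an ℝ-linear map. -/
noncomputable def smulI :
    (Cxf X × Module.Dual ℂ (Cxf X)) →ₗ[ℝ] (Cxf X × Module.Dual ℂ (Cxf X)) :=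
  (Complex.I • (LinearMap.id :
      (Cxf X × Module.Dual ℂ (Cxf X)) →ₗ[ℂ] (Cxf X × Module.Dual ℂ (Cxf X)))).restrictScalars ℝ

/-- The map `p ↦ ζ(p) - i•ζ(𝓙 p)`, whose range is the `+i`-eigenspace of the
ℂ-linear extension of `𝓙` to `V_ℂ ⊕ V_ℂ*`. -/
noncomputable def etaJ (J : (X × Module.Dual ℝ X) →ₗ[ℝ] (X × Module.Dual ℝ X)) :
    (X × Module.Dual ℝ X) →ₗ[ℝ] (Cxf X × Module.Dual ℂ (Cxf X)) :=
  zeta X - (smulI X) ∘ₗ (zeta X) ∘ₗ J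

end Eigenspace

section AuxA

variable (X : Type*) [AddCommGroup X] [Module ℝ X]

lemma dualExt_tmul (f : Module.Dual ℝ X) (c : ℂ) (x : X) :
    dualExt X f (c ⊗ₜ[ℝ] x) = (f x) • c := by
  simp [dualExt]

noncomputable def reT : Cxf X →ₗ[ℝ] X :=
  (TensorProduct.lid ℝ X).toLinearMap ∘ₗ TensorProduct.map Complex.reLm LinearMap.id

noncomputable def imT : Cxf X →ₗ[ℝ] X :=
  (TensorProduct.lid ℝ X).toLinearMap ∘ₗ TensorProduct.map Complex.imLm LinearMap.id

lemma I_smul_tmul (c : ℂ) (x : X) :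
    Complex.I • (c ⊗ₜ[ℝ] x) = (Complex.I * c) ⊗ₜ[ℝ] x := by
  rw [TensorProduct.smul_tmul']; rfl

lemma reT_tmul (c : ℂ) (x : X) : reT X (c ⊗ₜ[ℝ] x) = c.re • x := by
  simp [reT]

lemma imT_tmul (c : ℂ) (x : X) : imT X (c ⊗ₜ[ℝ] x) = c.im • x := by
  simp [imT]

lemma cx_decomp_inj {a b : X}
    (h : (1:ℂ) ⊗ₜ[ℝ] a + Complex.I • ((1:ℂ) ⊗ₜ[ℝ] b) = 0) : a = 0 ∧ b = 0 := by
  constructor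
  · have := congrArg (reT X) h
    simpa [I_smul_tmul, reT_tmul, map_add] using this
  · have := congrArg (imT X) h
    simpa [I_smul_tmul, imT_tmul, map_add] using this

lemma cx_decomp_surj (u : Cxf X) :
    ∃ a b : X, u = (1:ℂ) ⊗ₜ[ℝ] a + Complex.I • ((1:ℂ) ⊗ₜ[ℝ] b) := by
  induction u using TensorProduct.induction_on with
  | zero => exact ⟨0, 0, by simp⟩
  | tmul c x =>
      refine ⟨c.re • x, c.im • x, ?_⟩
      rw [tmul_smul, tmul_smul, smul_comm Complex.I c.im, I_smul_tmul, mul_one,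
        smul_tmul', smul_tmul', ← add_tmul]
      congr 1
      simp [Complex.real_smul]

  | add x y hx hy =>
      obtain ⟨a, b, rfl⟩ := hx
      obtain ⟨a', b', rfl⟩ := hy
      exact ⟨a + a', b + b', by rw [tmul_add, tmul_add]; rw [smul_add]; abel⟩

lemma dual_decomp_inj {f g : Module.Dual ℝ X}
    (h : dualExt X f + Complex.I • dualExt X g = 0) : f = 0 ∧ g = 0 := by
  have key : ∀ x : X, (f x : ℂ) + Complex.I * (g x) = 0 := by
    intro x
    have := congrFun (congrArg (DFunLike.coe) h) ((1:ℂ) ⊗ₜ[ℝ] x)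
    simpa [dualExt_tmul, Complex.real_smul, smul_eq_mul] using this
  constructor
  · ext x; have := key x
    have := congrArg Complex.re this; simpa using this
  · ext x; have := key x
    have := congrArg Complex.im this; simpa using this

end AuxA
section AuxB

variable (X : Type*) [AddCommGroup X] [Module ℝ X]

lemma zeta_apply (p : X × Module.Dual ℝ X) :
    zeta X p = ((1:ℂ) ⊗ₜ[ℝ] p.1, dualExt X p.2) := rfl

lemma smulI_apply (x : Cxf X × Module.Dual ℂ (Cxf X)) :
    smulI X x = (Complex.I • x.1, Complex.I • x.2) := rfl

lemma etaJ_apply (K : (X × Module.Dual ℝ X) →ₗ[ℝ] (X × Module.Dual ℝ X))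
    (p : X × Module.Dual ℝ X) :
    etaJ X K p = zeta X p - smulI X (zeta X (K p)) := rfl

lemma zeta_smulI_inj {a b : X × Module.Dual ℝ X}
    (h : zeta X a + smulI X (zeta X b) = 0) : a = 0 ∧ b = 0 := by
  have h1 := congrArg Prod.fst h
  have h2 := congrArg Prod.snd h
  simp only [zeta_apply, smulI_apply, Prod.fst_add, Prod.snd_add, Prod.fst_zero,
    Prod.snd_zero] at h1 h2
  obtain ⟨ha1, hb1⟩ := cx_decomp_inj X h1
  obtain ⟨ha2, hb2⟩ := dual_decomp_inj X h2
  exact ⟨Prod.ext ha1 ha2, Prod.ext hb1 hb2⟩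

lemma conjC_tmul (c : ℂ) (x : X) :
    conjC X (c ⊗ₜ[ℝ] x) = (starRingEnd ℂ c) ⊗ₜ[ℝ] x := by
  simp [conjC, Complex.conjAe_coe]

lemma conjD_apply (f : Module.Dual ℂ (Cxf X)) (x : Cxf X) :
    conjD X f x = starRingEnd ℂ (f (conjC X x)) := rfl

lemma conjD_dualExt (f : Module.Dual ℝ X) : conjD X (dualExt X f) = dualExt X f := by
  apply LinearMap.ext
  intro x
  induction x using TensorProduct.induction_on with
  | zero => simp
  | tmul c v => simp [conjD_apply, conjC_tmul, dualExt_tmul, Complex.real_smul, map_mul]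
  | add x y hx hy => rw [map_add, map_add, hx, hy]

lemma conjD_smul (c : ℂ) (f : Module.Dual ℂ (Cxf X)) :
    conjD X (c • f) = (starRingEnd ℂ c) • conjD X f := by
  apply LinearMap.ext
  intro x
  simp [conjD_apply, smul_eq_mul, map_mul]

lemma conjP_zeta (p : X × Module.Dual ℝ X) : conjP X (zeta X p) = zeta X p := by
  apply Prod.ext
  · show conjC X ((1:ℂ) ⊗ₜ[ℝ] p.1) = _
    simp [conjC_tmul, zeta_apply]
  · show conjD X (dualExt X p.2) = _
    simp [conjD_dualExt, zeta_apply]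

lemma conjP_smulI (x : Cxf X × Module.Dual ℂ (Cxf X)) :
    conjP X (smulI X x) = -(smulI X (conjP X x)) := by
  apply Prod.ext
  · show conjC X (Complex.I • x.1) = _
    simp [conjC_smul, smulI_apply, Complex.conj_I, conjP, neg_smul]
  · show conjD X (Complex.I • x.2) = _
    simp [conjD_smul, smulI_apply, Complex.conj_I, conjP, neg_smul]

lemma etaJ_inter_conj (K : (X × Module.Dual ℝ X) →ₗ[ℝ] (X × Module.Dual ℝ X))
    (hK : K ∘ₗ K = -LinearMap.id) :
    LinearMap.range (etaJ X K) ⊓ (LinearMap.range (etaJ X K)).map (conjP X) = ⊥ := by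
  rw [eq_bot_iff]
  rintro x ⟨hx1, hx2⟩
  obtain ⟨p, hp⟩ := hx1
  obtain ⟨y, ⟨q, hq⟩, hy⟩ := hx2
  have hcon : conjP X (etaJ X K q) = zeta X q + smulI X (zeta X (K q)) := by
    rw [etaJ_apply, map_sub, conjP_smulI, conjP_zeta, conjP_zeta, sub_neg_eq_add]
  have key : zeta X (p - q) + smulI X (zeta X (-(K p) - K q)) = 0 := by
    have h0 : etaJ X K p - conjP X (etaJ X K q) = 0 := by
      rw [hp, hq, hy]; exact sub_self x
    rw [etaJ_apply, hcon] at h0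
    rw [map_sub, map_sub, map_neg, map_sub, map_neg]
    linear_combination (norm := module) h0
  obtain ⟨h1, h2⟩ := zeta_smulI_inj X key
  have hpq : p = q := by rwa [sub_eq_zero] at h1
  have hKp : K p = 0 := by
    have : -(K p) - K q = 0 := h2
    rw [← hpq] at this
    have h2' : (2 : ℝ) • K p = 0 := by
      rw [two_smul]
      linear_combination (norm := module) -this
    simpa using smul_eq_zero.mp h2'
  have hp0 : p = 0 := by
    have := congrFun (congrArg DFunLike.coe hK) p
    simp only [LinearMap.comp_apply, LinearMap.neg_apply, LinearMap.id_apply] at this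
    rw [hKp, map_zero] at this
    simpa using this.symm
  simp [← hp, hp0, etaJ_apply]

end AuxB
section AuxC

variable {V : Type*} [AddCommGroup V] [Module ℝ V]

lemma cxIncl_tmul (W : Submodule ℝ V) (c : ℂ) (w : W) :
    cxIncl W (c ⊗ₜ[ℝ] w) = c ⊗ₜ[ℝ] (w : V) := rfl

lemma cxIncl_inj {W N : Submodule ℝ V} (hWN : IsCompl W N) :
    Function.Injective (cxIncl W) := by
  have hcomp : (W.linearProjOfIsCompl N hWN).baseChange ℂ ∘ₗ cxIncl W
      = LinearMap.id := by
    rw [cxIncl, ← LinearMap.baseChange_comp, show W.linearProjOfIsCompl N hWN ∘ₗ W.subtype = LinearMap.id from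
        Submodule.projectionOnto_comp_subtype hWN,
      LinearMap.baseChange_id]
  intro u v h
  have := congrArg ((W.linearProjOfIsCompl N hWN).baseChange ℂ) h
  have h1 := congrFun (congrArg DFunLike.coe hcomp) u
  have h2 := congrFun (congrArg DFunLike.coe hcomp) v
  simp only [LinearMap.comp_apply, LinearMap.id_apply] at h1 h2
  rw [h1, h2] at this
  exact this

lemma dualExt_comp_cxIncl (W : Submodule ℝ V) (f : Module.Dual ℝ V) :
    (cxIncl W).dualMap (dualExt V f) = dualExt ↥W (f ∘ₗ W.subtype) := by
  apply LinearMap.ext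
  intro x
  induction x using TensorProduct.induction_on with
  | zero => simp
  | tmul c w =>
      simp only [LinearMap.dualMap_apply, cxIncl_tmul, dualExt_tmul, LinearMap.comp_apply]
      rfl
  | add x y hx hy => rw [map_add, map_add, hx, hy]

variable (W N : Submodule ℝ V) (hWN : IsCompl W N)

lemma coe_proj_of_mem {v : V} (hv : v ∈ W) :
    ((W.linearProjOfIsCompl N hWN) v : V) = v :=
  congrArg Subtype.val (Submodule.linearProjOfIsCompl_apply_left hWN ⟨v, hv⟩)

lemma proj_diff_mem (v : V) : v - ↑((W.linearProjOfIsCompl N hWN) v) ∈ N := by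
  rw [← Submodule.linearProjOfIsCompl_apply_eq_zero_iff hWN]
  rw [map_sub]
  rw [Submodule.linearProjOfIsCompl_apply_left hWN]
  exact sub_self _

lemma ann_apply_proj {f : Module.Dual ℝ V} (hf : f ∈ N.dualAnnihilator) (v : V) :
    f ↑((W.linearProjOfIsCompl N hWN) v) = f v := by
  have h := ((Submodule.mem_dualAnnihilator f).mp hf) _ (proj_diff_mem W N hWN v)
  rw [map_sub] at h
  linarith

lemma subtype_dualMap_proj_dualMap (g : Module.Dual ℝ ↥W) :
    W.subtype.dualMap ((W.linearProjOfIsCompl N hWN).dualMap g) = g := by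
  apply LinearMap.ext; intro w
  simp [Submodule.linearProjOfIsCompl_apply_left hWN]
  exact congrArg g (Submodule.projectionOnto_apply_left hWN w)

lemma proj_dualMap_mem_ann (g : Module.Dual ℝ ↥W) :
    (W.linearProjOfIsCompl N hWN).dualMap g ∈ N.dualAnnihilator := by
  rw [Submodule.mem_dualAnnihilator _]
  intro n hn
  simp [show W.linearProjOfIsCompl N hWN n = 0 from
    (Submodule.projectionOnto_apply_eq_zero_iff hWN).mpr hn]

end AuxC
section AuxD

variable {V : Type*} [AddCommGroup V] [Module ℝ V]
variable (W N : Submodule ℝ V) (hWN : IsCompl W N)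

noncomputable def psiTo : (V × Module.Dual ℝ V) →ₗ[ℝ] (↥W × Module.Dual ℝ ↥W) :=
  LinearMap.prodMap (W.linearProjOfIsCompl N hWN) (W.subtype.dualMap)

noncomputable def psiFrom : (↥W × Module.Dual ℝ ↥W) →ₗ[ℝ] (V × Module.Dual ℝ V) :=
  LinearMap.prodMap W.subtype ((W.linearProjOfIsCompl N hWN).dualMap)

lemma inducedSplitJ_eq (J : (V × Module.Dual ℝ V) →ₗ[ℝ] (V × Module.Dual ℝ V)) :
    inducedSplitJ J W N hWN = psiTo W N hWN ∘ₗ J ∘ₗ psiFrom W N hWN := rfl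

lemma psiTo_psiFrom (x : ↥W × Module.Dual ℝ ↥W) :
    psiTo W N hWN (psiFrom W N hWN x) = x := by
  apply Prod.ext
  · exact Submodule.linearProjOfIsCompl_apply_left hWN x.1
  · exact subtype_dualMap_proj_dualMap W N hWN x.2

lemma psiFrom_mem (x : ↥W × Module.Dual ℝ ↥W) :
    psiFrom W N hWN x ∈ W.prod N.dualAnnihilator :=
  Submodule.mem_prod.mpr ⟨Submodule.coe_mem x.1, proj_dualMap_mem_ann W N hWN x.2⟩

lemma psiFrom_psiTo {p : V × Module.Dual ℝ V} (hp : p ∈ W.prod N.dualAnnihilator) :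
    psiFrom W N hWN (psiTo W N hWN p) = p := by
  obtain ⟨h1, h2⟩ := Submodule.mem_prod.mp hp
  apply Prod.ext
  · exact coe_proj_of_mem W N hWN h1
  · apply LinearMap.ext; intro v
    exact ann_apply_proj W N hWN h2 v

lemma gcPair_psiTo {p q : V × Module.Dual ℝ V} (hp : p ∈ W.prod N.dualAnnihilator)
    (hq : q ∈ W.prod N.dualAnnihilator) :
    gcPair ↥W (psiTo W N hWN p) (psiTo W N hWN q) = gcPair V p q := by
  obtain ⟨hp1, _⟩ := Submodule.mem_prod.mp hp
  obtain ⟨hq1, _⟩ := Submodule.mem_prod.mp hq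
  simp only [gcPair, psiTo, LinearMap.prodMap_apply, LinearMap.dualMap_apply,
    Submodule.coe_subtype]
  rw [coe_proj_of_mem W N hWN hq1, coe_proj_of_mem W N hWN hp1]

lemma gcPair_ST {r t : V × Module.Dual ℝ V} (hr : r ∈ W.prod N.dualAnnihilator)
    (ht : t ∈ N.prod W.dualAnnihilator) : gcPair V t r = 0 := by
  obtain ⟨hr1, hr2⟩ := Submodule.mem_prod.mp hr
  obtain ⟨ht1, ht2⟩ := Submodule.mem_prod.mp ht
  have h1 : t.2 r.1 = 0 := ((Submodule.mem_dualAnnihilator t.2).mp ht2) r.1 hr1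
  have h2 : r.2 t.1 = 0 := ((Submodule.mem_dualAnnihilator r.2).mp hr2) t.1 ht1
  simp [gcPair, h1, h2]

include hWN in
lemma stable_compl (J : (V × Module.Dual ℝ V) →ₗ[ℝ] (V × Module.Dual ℝ V))
    (hJ : IsGCS V J)
    (hstable : ∀ p ∈ W.prod N.dualAnnihilator, J p ∈ W.prod N.dualAnnihilator) :
    ∀ p ∈ N.prod W.dualAnnihilator, J p ∈ N.prod W.dualAnnihilator := by
  have hJJ : ∀ p, J (J p) = -p := fun p => by
    have := congrFun (congrArg DFunLike.coe hJ.1) p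
    simpa using this
  intro q hq
  have horth : ∀ p ∈ W.prod N.dualAnnihilator, gcPair V (J q) p = 0 := by
    intro p hp
    have hp' : -(J p) ∈ W.prod N.dualAnnihilator := Submodule.neg_mem _ (hstable p hp)
    have hJp' : J (-(J p)) = p := by rw [map_neg, hJJ, neg_neg]
    calc gcPair V (J q) p = gcPair V (J q) (J (-(J p))) := by rw [hJp']
      _ = gcPair V q (-(J p)) := hJ.2 q _
      _ = 0 := gcPair_ST W N hp' hq
  refine Submodule.mem_prod.mpr ⟨?_, ?_⟩
  · rw [← Submodule.linearProjOfIsCompl_apply_eq_zero_iff hWN]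
    apply (Module.forall_dual_apply_eq_zero_iff ℝ _).mp
    intro g
    have hmem : (0, (W.linearProjOfIsCompl N hWN).dualMap g) ∈ W.prod N.dualAnnihilator :=
      Submodule.mem_prod.mpr ⟨Submodule.zero_mem W, proj_dualMap_mem_ann W N hWN g⟩
    have h0 := horth _ hmem
    simp only [gcPair, map_zero, zero_add, LinearMap.dualMap_apply] at h0
    have := mul_eq_zero.mp h0
    norm_num at this
    exact this
  · rw [Submodule.mem_dualAnnihilator _]
    intro w hw
    have h0 := horth (w, (0 : Module.Dual ℝ V))
      (Submodule.mem_prod.mpr ⟨hw, Submodule.zero_mem _⟩)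
    simp only [gcPair, LinearMap.zero_apply, add_zero] at h0
    have := mul_eq_zero.mp h0
    norm_num at this
    exact this

lemma isGCS_induced (J : (V × Module.Dual ℝ V) →ₗ[ℝ] (V × Module.Dual ℝ V))
    (hJ : IsGCS V J)
    (hstable : ∀ p ∈ W.prod N.dualAnnihilator, J p ∈ W.prod N.dualAnnihilator) :
    IsGCS ↥W (inducedSplitJ J W N hWN) := by
  have hJJ : ∀ p, J (J p) = -p := fun p => by
    have := congrFun (congrArg DFunLike.coe hJ.1) p
    simpa using this
  constructor
  · apply LinearMap.ext; intro x
    simp only [inducedSplitJ_eq, LinearMap.comp_apply, LinearMap.neg_apply, LinearMap.id_apply]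
    rw [psiFrom_psiTo W N hWN (hstable _ (psiFrom_mem W N hWN x))]
    rw [hJJ, map_neg, psiTo_psiFrom]
  · intro x y
    simp only [inducedSplitJ_eq, LinearMap.comp_apply]
    rw [gcPair_psiTo W N hWN (hstable _ (psiFrom_mem W N hWN x))
      (hstable _ (psiFrom_mem W N hWN y)), hJ.2]
    have h := gcPair_psiTo W N hWN (psiFrom_mem W N hWN x) (psiFrom_mem W N hWN y)
    rw [psiTo_psiFrom, psiTo_psiFrom] at h
    rw [← h]

end AuxD
set_option maxHeartbeats 1600000 in
theorem split_subspace_is_GC_subspace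
    (V : Type*) [AddCommGroup V] [Module ℝ V] [FiniteDimensional ℝ V]
    (J : (V × Module.Dual ℝ V) →ₗ[ℝ] (V × Module.Dual ℝ V)) (hJ : IsGCS V J)
    (W N : Submodule ℝ V) (hWN : IsCompl W N)
    (hstable : ∀ p ∈ W.prod N.dualAnnihilator, J p ∈ W.prod N.dualAnnihilator)
    (E : Submodule ℂ (Cxf V × Module.Dual ℂ (Cxf V)))
    (hE : E.restrictScalars ℝ = LinearMap.range (etaJ V J)) :
    (∀ p ∈ N.prod W.dualAnnihilator, J p ∈ N.prod W.dualAnnihilator) ∧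
    IsGCS ↥W (inducedSplitJ J W N hWN) ∧
    IsGCSubspace E W ∧
    (inducedSub E W).restrictScalars ℝ =
      LinearMap.range (etaJ ↥W (inducedSplitJ J W N hWN)) := by
  have hT := stable_compl W N hWN J hJ hstable
  have hGCS := isGCS_induced W N hWN J hJ hstable
  set π := W.linearProjOfIsCompl N hWN with hπdef
  set Jw := inducedSplitJ J W N hWN with hJwdef
  have hmemE : ∀ z, z ∈ E ↔ ∃ p, etaJ V J p = z := by
    intro z
    rw [← Submodule.restrictScalars_mem ℝ, hE, LinearMap.mem_range]
  have hJw_apply : ∀ x, Jw x = psiTo W N hWN (J (psiFrom W N hWN x)) := fun x => rfl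
  have hEq : (inducedSub E W).restrictScalars ℝ = LinearMap.range (etaJ ↥W Jw) := by
    ext x
    rw [Submodule.restrictScalars_mem, LinearMap.mem_range]
    constructor
    · intro hx
      rw [inducedSub, Submodule.mem_map] at hx
      obtain ⟨y, hy, rfl⟩ := hx
      rw [Submodule.mem_comap] at hy
      obtain ⟨p, hp⟩ := (hmemE _).mp hy
      obtain ⟨a, b, hu⟩ := cx_decomp_surj ↥W y.1
      -- first components
      have hfst0 := congrArg Prod.fst hp
      simp only [etaJ_apply, zeta_apply, smulI_apply, Prod.fst_sub, LinearMap.prodMap_apply,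
        LinearMap.id_apply] at hfst0
      -- hfst0 : 1 ⊗ p.1 - I • (1 ⊗ (J p).1) = cxIncl W y.1
      rw [hu, map_add, map_smul, cxIncl_tmul, cxIncl_tmul] at hfst0
      have hfst : (1:ℂ) ⊗ₜ[ℝ] (p.1 - (a : V)) +
          Complex.I • ((1:ℂ) ⊗ₜ[ℝ] (-(J p).1 - (b : V))) = 0 := by
        rw [tmul_sub, tmul_sub, tmul_neg, smul_sub]
        linear_combination (norm := module) hfst0
      obtain ⟨e1, e2⟩ := cx_decomp_inj V hfst
      rw [sub_eq_zero] at e1 e2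
      have hp1W : p.1 ∈ W := e1 ▸ Submodule.coe_mem a
      have hJp1 : (J p).1 = -(b : V) := by rw [← e2, neg_neg]
      have hJp1W : (J p).1 ∈ W := hJp1 ▸ Submodule.neg_mem W (Submodule.coe_mem b)
      -- split p = s + t
      set s : V × Module.Dual ℝ V := (p.1, π.dualMap (W.subtype.dualMap p.2)) with hsdef
      set t : V × Module.Dual ℝ V := p - s with htdef
      have hs : s ∈ W.prod N.dualAnnihilator :=
        Submodule.mem_prod.mpr ⟨hp1W, proj_dualMap_mem_ann W N hWN _⟩
      have ht : t ∈ N.prod W.dualAnnihilator := by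
        refine Submodule.mem_prod.mpr ⟨?_, ?_⟩
        · show p.1 - s.1 ∈ N
          rw [hsdef]; simp
        · rw [Submodule.mem_dualAnnihilator _]
          intro w hw
          show p.2 w - s.2 w = 0
          rw [hsdef]
          show p.2 w - p.2 ((π w : V)) = 0
          rw [coe_proj_of_mem W N hWN hw, sub_self]
      have hJs := hstable s hs
      have hJt := hT t ht
      have hpst : p = s + t := by rw [htdef, add_sub_cancel]
      have hJsplit : J p = J s + J t := by rw [hpst, map_add]
      have hJt1 : (J t).1 = 0 := by
        have hWm : (J t).1 ∈ W := by
          have h' : (J t).1 = (J p).1 - (J s).1 := by rw [hJsplit]; simp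
          rw [h']
          exact Submodule.sub_mem W hJp1W (Submodule.mem_prod.mp hJs).1
        have hNm : (J t).1 ∈ N := (Submodule.mem_prod.mp hJt).1
        have : (J t).1 ∈ W ⊓ N := Submodule.mem_inf.mpr ⟨hWm, hNm⟩
        rw [hWN.inf_eq_bot, Submodule.mem_bot] at this
        exact this
      have hJt2 : ∀ w : W, (J t).2 (w : V) = 0 := fun w =>
        ((Submodule.mem_dualAnnihilator _).mp (Submodule.mem_prod.mp hJt).2) _ w.2
      refine ⟨psiTo W N hWN s, ?_⟩
      have hJws : Jw (psiTo W N hWN s) = psiTo W N hWN (J s) := by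
        rw [hJw_apply, psiFrom_psiTo W N hWN hs]
      apply Prod.ext
      · -- first component
        show (etaJ ↥W Jw (psiTo W N hWN s)).1 = y.1
        simp only [etaJ_apply, zeta_apply, smulI_apply, Prod.fst_sub]
        rw [hJws]
        show (1:ℂ) ⊗ₜ[ℝ] (π s.1) - Complex.I • ((1:ℂ) ⊗ₜ[ℝ] (π (J s).1)) = y.1
        have hπs1 : π s.1 = a := by
          show π p.1 = a
          rw [e1]; exact Submodule.projectionOnto_apply_left hWN a
        have hπJs1 : π (J s).1 = -b := by
          have h' : (J s).1 = (J p).1 := by rw [hJsplit]; simp [hJt1]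
          rw [h', hJp1, map_neg]
          exact congrArg Neg.neg (Submodule.projectionOnto_apply_left hWN b)
        rw [hπs1, hπJs1, hu, tmul_neg, smul_neg, sub_neg_eq_add]
      · -- second component
        show (etaJ ↥W Jw (psiTo W N hWN s)).2 = (cxIncl W).dualMap y.2
        have hy2 : y.2 = dualExt V p.2 - Complex.I • dualExt V ((J p).2) := by
          have h' := congrArg Prod.snd hp
          simp only [etaJ_apply, zeta_apply, smulI_apply, Prod.snd_sub, LinearMap.prodMap_apply,
            LinearMap.id_apply] at h'
          exact h'.symm
        have hs2 : W.subtype.dualMap s.2 = W.subtype.dualMap p.2 := by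
          show W.subtype.dualMap (π.dualMap (W.subtype.dualMap p.2)) = _
          exact subtype_dualMap_proj_dualMap W N hWN _
        have hJs2 : W.subtype.dualMap (J s).2 = W.subtype.dualMap (J p).2 := by
          apply LinearMap.ext; intro w
          have h' : (J p).2 = (J s).2 + (J t).2 := by rw [hJsplit]; simp
          simp [h', hJt2 w]
        simp only [etaJ_apply, zeta_apply, smulI_apply, Prod.snd_sub]
        rw [hJws]
        show dualExt ↥W (W.subtype.dualMap s.2) -
            Complex.I • dualExt ↥W (W.subtype.dualMap (J s).2) = (cxIncl W).dualMap y.2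
        rw [hs2, hJs2, hy2, map_sub, map_smul, dualExt_comp_cxIncl, dualExt_comp_cxIncl]
        rfl
    · rintro ⟨q, rfl⟩
      set p := psiFrom W N hWN q with hpdef
      have hpS := psiFrom_mem W N hWN q
      have hJpS := hstable p hpS
      rw [inducedSub, Submodule.mem_map]
      refine ⟨((etaJ ↥W Jw q).1, (etaJ V J p).2), ?_, ?_⟩
      · rw [Submodule.mem_comap]
        have hfirst : cxIncl W ((etaJ ↥W Jw q).1) = (etaJ V J p).1 := by
          simp only [etaJ_apply, zeta_apply, smulI_apply, Prod.fst_sub]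
          rw [map_sub, map_smul, cxIncl_tmul, cxIncl_tmul]
          have h1 : (((W.linearProjOfIsCompl N hWN) ((J p).1) : ↥W) : V) = (J p).1 :=
            coe_proj_of_mem W N hWN (Submodule.mem_prod.mp hJpS).1
          show (1:ℂ) ⊗ₜ[ℝ] ((q.1 : V)) - Complex.I •
              ((1:ℂ) ⊗ₜ[ℝ] (((W.linearProjOfIsCompl N hWN) ((J p).1) : ↥W) : V)) =
              (1:ℂ) ⊗ₜ[ℝ] p.1 - Complex.I • ((1:ℂ) ⊗ₜ[ℝ] (J p).1)
          rw [h1]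
          rfl
        have : (LinearMap.prodMap (cxIncl W) LinearMap.id)
            ((etaJ ↥W Jw q).1, (etaJ V J p).2) = etaJ V J p := by
          apply Prod.ext
          · exact hfirst
          · rfl
        rw [this]
        exact (hmemE _).mpr ⟨p, rfl⟩
      · apply Prod.ext
        · rfl
        · show (cxIncl W).dualMap ((etaJ V J p).2) = (etaJ ↥W Jw q).2
          simp only [etaJ_apply, zeta_apply, smulI_apply, Prod.snd_sub]
          rw [map_sub, map_smul, dualExt_comp_cxIncl, dualExt_comp_cxIncl]
          have hq2 : (p.2 ∘ₗ W.subtype) = q.2 := by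
            show ((π.dualMap q.2) ∘ₗ W.subtype) = q.2
            exact subtype_dualMap_proj_dualMap W N hWN q.2
          have hJq2 : ((J p).2 ∘ₗ W.subtype) = (Jw q).2 := rfl
          rw [hq2, hJq2]

  refine ⟨hT, hGCS, ?_, hEq⟩
  show _ = ⊥
  rw [hEq]
  exact etaJ_inter_conj ↥W Jw hGCS.1
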